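/- For θ ∈ (0,π), β ∈ [0,π), and all x, u ∈ ℝ with x < 0 and u < 0: φ^g(x, β, θ) ≥ φ^g(x, 0, θ) = lim_{u'↗0} φ(x, u', θ) > φ(x, u, θ), where φ(x, u, θ) = f_θ(u − x) − f_θ(u + x) and φ^g(x, β, θ) = f_θ(iβ − x) − f_θ(iβ + x). -/

import Mathlib

open Real Complex Filter

private lemma re_calc_aux (s A B : ℝ) (h : A^2 + B^2 ≠ 0) :
    ((↑s / (2*(↑A - ↑B*Complex.I)) - ↑s / (2*(↑A + ↑B*Complex.I))) * Complex.I).re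
      = -(s*B) / (A^2+B^2) := by
  have h1 : (↑A - ↑B*Complex.I : ℂ) ≠ 0 := by
    intro h0
    rw [Complex.ext_iff] at h0
    simp at h0
    exact h (by rw [h0.1, h0.2]; ring)
  have h2 : (↑A + ↑B*Complex.I : ℂ) ≠ 0 := by
    intro h0
    rw [Complex.ext_iff] at h0
    simp at h0
    exact h (by rw [h0.1, h0.2]; ring)
  have h3 : ((A:ℂ)^2 + (B:ℂ)^2) ≠ 0 := by
    intro h0; apply h; exact_mod_cast h0
  have : (↑s / (2*(↑A - ↑B*Complex.I)) - ↑s / (2*(↑A + ↑B*Complex.I))) * Complex.I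
      = ((-(s*B) / (A^2+B^2) : ℝ) : ℂ) := by
    push_cast
    field_simp
    ring_nf
    simp [Complex.I_sq]
    ring
  rw [this, Complex.ofReal_re]

private lemma cosh_expand (b c : ℝ) :
    Complex.cosh (Complex.I*(b:ℂ) + (c:ℂ))
      = ↑(Real.cos b * Real.cosh c) + ↑(Real.sin b * Real.sinh c) * Complex.I := by
  rw [mul_comm Complex.I, Complex.cosh_add, Complex.cosh_mul_I, Complex.sinh_mul_I]
  push_cast
  ring

theorem generalized_angle_comparison
    (θ : ℝ) (hθ : θ ∈ Set.Ioo 0 Real.pi) (f : ℝ → ℝ) (F : ℂ → ℂ)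
    (hderiv : ∀ x : ℝ, HasDerivAt f (Real.sin θ / (2 * (Real.cosh x - Real.cos θ))) x)
    (hrange : ∀ x : ℝ, f x ∈ Set.Ioo 0 (Real.pi - θ))
    (hFreal : ∀ x : ℝ, x ≠ 0 → F (x : ℂ) = (f x : ℂ))
    (hF : ∀ z : ℂ, z.re ≠ 0 → -Real.pi < z.im → z.im < Real.pi →
      HasDerivAt F (Complex.sin (θ : ℂ) / (2 * (Complex.cosh z - Complex.cos (θ : ℂ)))) z) :
    ∀ x u β : ℝ, x < 0 → u < 0 → 0 ≤ β → β < Real.pi →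
      ((F (Complex.I * (β : ℂ) - (x : ℂ)) - F (Complex.I * (β : ℂ) + (x : ℂ))).re ≥
        (F (Complex.I * (0 : ℂ) - (x : ℂ)) - F (Complex.I * (0 : ℂ) + (x : ℂ))).re) ∧
      (Tendsto (fun u' : ℝ => f (u' - x) - f (u' + x)) (nhdsWithin 0 (Set.Iio 0))
        (nhds ((F (Complex.I * (0 : ℂ) - (x : ℂ)) - F (Complex.I * (0 : ℂ) + (x : ℂ))).re))) ∧
      ((F (Complex.I * (0 : ℂ) - (x : ℂ)) - F (Complex.I * (0 : ℂ) + (x : ℂ))).re >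
        f (u - x) - f (u + x)) := by
  intro x u β hx hu hβ0 hβπ
  have hx0 : x ≠ 0 := ne_of_lt hx
  have hsinθ : 0 < Real.sin θ := Real.sin_pos_of_pos_of_lt_pi hθ.1 hθ.2
  have hcosθ : Real.cos θ < 1 := by
    have := Real.cos_lt_cos_of_nonneg_of_le_pi (le_refl 0) (le_of_lt hθ.2) hθ.1
    simpa using this
  -- value at β = 0
  have hz0m : Complex.I * (0 : ℂ) - (x:ℂ) = ((-x : ℝ) : ℂ) := by push_cast; ring
  have hz0p : Complex.I * (0 : ℂ) + (x:ℂ) = ((x : ℝ) : ℂ) := by push_cast; ring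
  have hF0 : (F (Complex.I * (0 : ℂ) - (x:ℂ)) - F (Complex.I * (0 : ℂ) + (x:ℂ))).re
      = f (-x) - f x := by
    rw [hz0m, hz0p, hFreal (-x) (by simpa using hx0), hFreal x hx0]
    simp [Complex.sub_re]
  -- continuity of f
  have hfc : Continuous f := by
    rw [continuous_iff_continuousAt]; exact fun t => (hderiv t).continuousAt
  -- the function h of β
  set h : ℝ → ℝ := fun b => (F (Complex.I * (b : ℂ) - (x:ℂ)) - F (Complex.I * (b : ℂ) + (x:ℂ))).re with hh
  -- derivative of h
  have key : ∀ b : ℝ, -Real.pi < b → b < Real.pi →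
      HasDerivAt h
        (((Complex.sin (θ:ℂ) / (2*(Complex.cosh (Complex.I*(b:ℂ) - (x:ℂ)) - Complex.cos (θ:ℂ))) -
           Complex.sin (θ:ℂ) / (2*(Complex.cosh (Complex.I*(b:ℂ) + (x:ℂ)) - Complex.cos (θ:ℂ)))) * Complex.I).re) b := by
    intro b hb1 hb2
    have hin1 : HasDerivAt (fun z : ℂ => Complex.I*z - (x:ℂ)) Complex.I (b:ℂ) := by
      simpa using ((hasDerivAt_id (b:ℂ)).const_mul Complex.I).sub_const (x:ℂ)
    have hin2 : HasDerivAt (fun z : ℂ => Complex.I*z + (x:ℂ)) Complex.I (b:ℂ) := by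
      simpa using ((hasDerivAt_id (b:ℂ)).const_mul Complex.I).add_const (x:ℂ)
    have hre1 : (Complex.I*(b:ℂ) - (x:ℂ)).re ≠ 0 := by simp [hx0]
    have him1 : (Complex.I*(b:ℂ) - (x:ℂ)).im = b := by simp
    have hre2 : (Complex.I*(b:ℂ) + (x:ℂ)).re ≠ 0 := by simp [hx0]
    have him2 : (Complex.I*(b:ℂ) + (x:ℂ)).im = b := by simp
    have H1 : HasDerivAt (fun z : ℂ => F (Complex.I*z - (x:ℂ)))
        (Complex.sin (θ:ℂ) / (2*(Complex.cosh (Complex.I*(b:ℂ) - (x:ℂ)) - Complex.cos (θ:ℂ))) * Complex.I) (b:ℂ) :=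
      (hF _ hre1 (by rw [him1]; exact hb1) (by rw [him1]; exact hb2)).comp (b:ℂ) hin1
    have H2 : HasDerivAt (fun z : ℂ => F (Complex.I*z + (x:ℂ)))
        (Complex.sin (θ:ℂ) / (2*(Complex.cosh (Complex.I*(b:ℂ) + (x:ℂ)) - Complex.cos (θ:ℂ))) * Complex.I) (b:ℂ) :=
      (hF _ hre2 (by rw [him2]; exact hb1) (by rw [him2]; exact hb2)).comp (b:ℂ) hin2
    have HG : HasDerivAt (fun b' : ℝ => F (Complex.I*(b':ℂ) - (x:ℂ)) - F (Complex.I*(b':ℂ) + (x:ℂ)))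
        ((Complex.sin (θ:ℂ) / (2*(Complex.cosh (Complex.I*(b:ℂ) - (x:ℂ)) - Complex.cos (θ:ℂ))) -
          Complex.sin (θ:ℂ) / (2*(Complex.cosh (Complex.I*(b:ℂ) + (x:ℂ)) - Complex.cos (θ:ℂ)))) * Complex.I) b := by
      rw [sub_mul]; exact (H1.comp_ofReal).sub (H2.comp_ofReal)
    exact (Complex.reCLM.hasFDerivAt.comp_hasDerivAt b HG).congr_deriv (by simp)
  -- identify the derivative value for b ∈ [0, π)
  have dval : ∀ b : ℝ, 0 ≤ b → b < Real.pi →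
      0 ≤ ((Complex.sin (θ:ℂ) / (2*(Complex.cosh (Complex.I*(b:ℂ) - (x:ℂ)) - Complex.cos (θ:ℂ))) -
           Complex.sin (θ:ℂ) / (2*(Complex.cosh (Complex.I*(b:ℂ) + (x:ℂ)) - Complex.cos (θ:ℂ)))) * Complex.I).re := by
    intro b hb1 hb2
    have hm : Complex.I*(b:ℂ) - (x:ℂ) = Complex.I*(b:ℂ) + ((-x : ℝ):ℂ) := by push_cast; ring
    set A : ℝ := Real.cos b * Real.cosh x - Real.cos θ with hA
    set B : ℝ := Real.sin b * Real.sinh x with hB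
    have hcm : Complex.cosh (Complex.I*(b:ℂ) - (x:ℂ)) - Complex.cos (θ:ℂ) = ↑A - ↑B*Complex.I := by
      rw [hm, cosh_expand, ← Complex.ofReal_cos, hA, hB]
      rw [Real.cosh_neg, Real.sinh_neg]
      push_cast
      ring
    have hcp : Complex.cosh (Complex.I*(b:ℂ) + (x:ℂ)) - Complex.cos (θ:ℂ) = ↑A + ↑B*Complex.I := by
      rw [cosh_expand, ← Complex.ofReal_cos, hA, hB]
      push_cast
      ring
    have hden : 0 < A^2 + B^2 := by
      rcases eq_or_lt_of_le hb1 with h0 | h0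
      · have : B = 0 := by simp [hB, ← h0]
        have hA' : 0 < A := by
          have : 1 < Real.cosh x := by
            rw [Real.one_lt_cosh]; exact hx0
          simp only [hA, ← h0, Real.cos_zero, one_mul]
          linarith
        nlinarith
      · have hs : 0 < Real.sin b := Real.sin_pos_of_pos_of_lt_pi h0 hb2
        have hsh : Real.sinh x < 0 := by
          have h' := Real.sinh_lt_sinh.mpr hx
          rwa [Real.sinh_zero] at h'
        have hBneg : B < 0 := mul_neg_of_pos_of_neg hs hsh
        nlinarith
    rw [hcm, hcp, ← Complex.ofReal_sin, re_calc_aux _ _ _ (ne_of_gt hden)]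
    have hBle : B ≤ 0 := by
      have hs : 0 ≤ Real.sin b := Real.sin_nonneg_of_nonneg_of_le_pi hb1 (le_of_lt hb2)
      have hsh : Real.sinh x ≤ 0 := by
        have h' := Real.sinh_lt_sinh.mpr hx
        rw [Real.sinh_zero] at h'
        linarith
      exact mul_nonpos_of_nonneg_of_nonpos hs hsh
    apply div_nonneg _ (le_of_lt hden)
    nlinarith
  -- Part 1 : monotonicity
  have part1 : h β ≥ h 0 := by
    have hmono : MonotoneOn h (Set.Icc 0 β) := by
      apply monotoneOn_of_deriv_nonneg (convex_Icc 0 β)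
      · intro b hb
        exact ((key b (by linarith [Real.pi_pos, hb.1]) (by linarith [hb.2])).continuousAt).continuousWithinAt
      · intro b hb
        rw [interior_Icc] at hb
        exact ((key b (by linarith [Real.pi_pos, hb.1.le]) (by linarith [hb.2])).differentiableAt).differentiableWithinAt
      · intro b hb
        rw [interior_Icc] at hb
        rw [(key b (by linarith [Real.pi_pos, hb.1.le]) (by linarith [hb.2])).deriv]
        exact dval b hb.1.le (by linarith [hb.2])
    rcases eq_or_lt_of_le hβ0 with h0 | h0
    · rw [← h0]
    · exact hmono (Set.left_mem_Icc.mpr hβ0) (Set.right_mem_Icc.mpr hβ0) hβ0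
  refine ⟨?_, ?_, ?_⟩
  · have e0 : h 0 = (F (Complex.I * (0:ℂ) - (x:ℂ)) - F (Complex.I * (0:ℂ) + (x:ℂ))).re := by
      simp [hh]
    have eβ : h β = (F (Complex.I * (β:ℂ) - (x:ℂ)) - F (Complex.I * (β:ℂ) + (x:ℂ))).re := rfl
    rw [← e0, ← eβ]; exact part1
  · rw [hF0]
    have hcont : Continuous fun u' : ℝ => f (u' - x) - f (u' + x) :=
      (hfc.comp (continuous_id.sub continuous_const)).sub
        (hfc.comp (continuous_id.add continuous_const))
    have ht : Tendsto (fun u' : ℝ => f (u' - x) - f (u' + x)) (nhdsWithin 0 (Set.Iio 0))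
        (nhds (f (0 - x) - f (0 + x))) := (hcont.tendsto 0).mono_left nhdsWithin_le_nhds
    simpa using ht
  · rw [hF0]
    set g : ℝ → ℝ := fun u' => f (u' - x) - f (u' + x) with hg
    have hgd : ∀ t : ℝ, HasDerivAt g
        (Real.sin θ / (2 * (Real.cosh (t - x) - Real.cos θ))
          - Real.sin θ / (2 * (Real.cosh (t + x) - Real.cos θ))) t := by
      intro t
      exact ((hderiv (t - x)).comp t (by simpa using (hasDerivAt_id t).sub_const x)
        |>.sub ((hderiv (t + x)).comp t (by simpa using (hasDerivAt_id t).add_const x))) |>.congr_deriv (by ring)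
    have hsm : StrictMonoOn g (Set.Iic 0) := by
      apply strictMonoOn_of_deriv_pos (convex_Iic 0)
      · exact fun t _ => ((hgd t).continuousAt).continuousWithinAt
      · intro t ht
        rw [interior_Iic] at ht
        rw [(hgd t).deriv]
        have hd1 : 0 < Real.cosh (t - x) - Real.cos θ := by
          have := Real.one_le_cosh (t - x); linarith
        have hd2 : 0 < Real.cosh (t + x) - Real.cos θ := by
          have := Real.one_le_cosh (t + x); linarith
        have hlt : Real.cosh (t - x) < Real.cosh (t + x) := by
          rw [Real.cosh_lt_cosh]
          have ht0 : t < 0 := ht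
          have h1 : |t + x| = -(t + x) := abs_of_neg (by linarith)
          rw [h1, abs_lt]
          constructor <;> linarith
        have := div_lt_div_of_pos_left hsinθ (by linarith) (by linarith : 2 * (Real.cosh (t - x) - Real.cos θ) < 2 * (Real.cosh (t + x) - Real.cos θ))
        linarith
    have : g u < g 0 := hsm (Set.mem_Iic.mpr (le_of_lt hu)) (Set.mem_Iic.mpr le_rfl) hu
    simpa [hg] using this
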